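/- For the two-loop two-point graph G with U = (α₁+α₅)(α₂+α₄) + α₃(α₁+α₂+α₄+α₅) and V = α₃(α₁+α₂)(α₄+α₅) + α₂α₄α₅ + α₁α₄α₅ + α₁α₂α₅ + α₁α₂α₄, the integral I_G = ∫ over the region {α₅ = 1, α_i > 0 for i ∈ {1,2,3,4}} of 1/(U·V) dα₁dα₂dα₃dα₄ converges. -/

import Mathlib

open MeasureTheory Set

noncomputable def gg (t : ℝ) : ℝ := t ^ (-(3:ℝ)/4) * (1+t) ^ (-(1:ℝ)/2)

lemma gg_pos {t : ℝ} (ht : 0 < t) : 0 < gg t := by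
  unfold gg
  have h1 : (0:ℝ) < 1 + t := by linarith
  positivity

lemma rpow_pow_eq {t a : ℝ} (ht : 0 ≤ t) {n m : ℕ} (h : a * n = m) : (t ^ a) ^ n = t ^ m := by
  rw [← Real.rpow_natCast (t ^ a) n, ← Real.rpow_mul ht, h, Real.rpow_natCast]

set_option maxHeartbeats 1000000 in
lemma key_bound {x y z w : ℝ} (hx : 0 < x) (hy : 0 < y) (hz : 0 < z) (hw : 0 < w) :
    1 / (((x + 1) * (y + w) + z * (x + y + w + 1)) *
        (z * (x + y) * (w + 1) + y * w * 1 + x * w * 1 + x * y * 1 + x * y * w)) ≤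
      4 * (gg x * (gg y * (gg z * gg w))) := by
  obtain ⟨U, hUdef⟩ : ∃ U : ℝ, U = (x + 1) * (y + w) + z * (x + y + w + 1) := ⟨_, rfl⟩
  obtain ⟨V, hVdef⟩ : ∃ V : ℝ,
      V = z * (x + y) * (w + 1) + y * w * 1 + x * w * 1 + x * y * 1 + x * y * w := ⟨_, rfl⟩
  rw [← hUdef, ← hVdef]
  have hxy := mul_pos hx hy
  have hxz := mul_pos hx hz
  have hxw := mul_pos hx hw
  have hyz := mul_pos hy hz
  have hyw := mul_pos hy hw
  have hzw := mul_pos hz hw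
  have hxyz := mul_pos hxy hz
  have hxyw := mul_pos hxy hw
  have hxzw := mul_pos hxz hw
  have hyzw := mul_pos hyz hw
  have hUpos : 0 < U := by rw [hUdef]; nlinarith [hxy, hxw, hxz, hyz, hzw]
  have hVpos : 0 < V := by rw [hVdef]; nlinarith [hxyz, hxzw, hyzw, hyw, hxw, hxy, hxyw, hxz, hyz]
  have hUV : 0 < U*V := mul_pos hUpos hVpos
  have hu3 : w ≤ U := by rw [hUdef]; nlinarith [hxy, hxw, hy, hxz, hyz, hzw, hz]
  have hu7 : z ≤ U := by rw [hUdef]; nlinarith [hxy, hxw, hy, hw, hxz, hyz, hzw]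
  have hu6 : z*w ≤ U := by rw [hUdef]; nlinarith [hxy, hxw, hy, hw, hxz, hyz, hz]
  have hu2 : y ≤ U := by rw [hUdef]; nlinarith [hxy, hxw, hw, hxz, hyz, hzw, hz]
  have hu5 : y*z ≤ U := by rw [hUdef]; nlinarith [hxy, hxw, hy, hw, hxz, hzw, hz]
  have hu4 : x*z ≤ U := by rw [hUdef]; nlinarith [hxy, hxw, hy, hw, hyz, hzw, hz]
  have hu0 : x*y ≤ U := by rw [hUdef]; nlinarith [hxw, hy, hw, hxz, hyz, hzw, hz]
  have hv4 : y*w ≤ V := by rw [hVdef]; nlinarith [hxzw, hxz, hyzw, hyz, hxw, hxy, hxyw]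
  have hv3 : y*z ≤ V := by rw [hVdef]; nlinarith [hxzw, hxz, hyzw, hyw, hxw, hxy, hxyw]
  have hv2 : y*z*w ≤ V := by rw [hVdef]; nlinarith [hxzw, hxz, hyz, hyw, hxw, hxy, hxyw]
  have hv1 : x*z ≤ V := by rw [hVdef]; nlinarith [hxzw, hyzw, hyz, hyw, hxw, hxy, hxyw]
  have hv0 : x*z*w ≤ V := by rw [hVdef]; nlinarith [hxz, hyzw, hyz, hyw, hxw, hxy, hxyw]
  have hv6 : x*y ≤ V := by rw [hVdef]; nlinarith [hxzw, hxz, hyzw, hyz, hyw, hxw, hxyw]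
  have hv7 : x*y*w ≤ V := by rw [hVdef]; nlinarith [hxzw, hxz, hyzw, hyz, hyw, hxw, hxy]
  have ht0 : x^3*y^3*z^3*w^3 ≤ (U*V)^4 := by
    have hm0_0 : (w)*(y*w) ≤ U*V := mul_le_mul hu3 hv4 hyw.le hUpos.le
    have hm0_1 : (w)*(x*z) ≤ U*V := mul_le_mul hu3 hv1 hxz.le hUpos.le
    have hm0_2 : (z)*(x*z) ≤ U*V := mul_le_mul hu7 hv1 hxz.le hUpos.le
    have hm0_3 : (y)*(x*y) ≤ U*V := mul_le_mul hu2 hv6 hxy.le hUpos.le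
    calc x^3*y^3*z^3*w^3 = ((w)*(y*w))*(((w)*(x*z))*(((z)*(x*z))*((y)*(x*y)))) := by ring
      _ ≤ (U*V)*((U*V)*((U*V)*(U*V))) := by
          refine mul_le_mul hm0_0 ?_ (by positivity) hUV.le
          refine mul_le_mul hm0_1 ?_ (by positivity) hUV.le
          exact mul_le_mul hm0_2 hm0_3 (by positivity) hUV.le
      _ = (U*V)^4 := by ring
  have ht1 : x^3*y^3*z^3*w^5 ≤ (U*V)^4 := by
    have hm1_0 : (w)*(y*w) ≤ U*V := mul_le_mul hu3 hv4 hyw.le hUpos.le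
    have hm1_1 : (w)*(y*w) ≤ U*V := mul_le_mul hu3 hv4 hyw.le hUpos.le
    have hm1_2 : (z)*(x*z) ≤ U*V := mul_le_mul hu7 hv1 hxz.le hUpos.le
    have hm1_3 : (x*y)*(x*z*w) ≤ U*V := mul_le_mul hu0 hv0 hxzw.le hUpos.le
    calc x^3*y^3*z^3*w^5 = ((w)*(y*w))*(((w)*(y*w))*(((z)*(x*z))*((x*y)*(x*z*w)))) := by ring
      _ ≤ (U*V)*((U*V)*((U*V)*(U*V))) := by
          refine mul_le_mul hm1_0 ?_ (by positivity) hUV.le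
          refine mul_le_mul hm1_1 ?_ (by positivity) hUV.le
          exact mul_le_mul hm1_2 hm1_3 (by positivity) hUV.le
      _ = (U*V)^4 := by ring
  have ht2 : x^3*y^3*z^5*w^3 ≤ (U*V)^4 := by
    have hm2_0 : (w)*(y*w) ≤ U*V := mul_le_mul hu3 hv4 hyw.le hUpos.le
    have hm2_1 : (w)*(y*z) ≤ U*V := mul_le_mul hu3 hv3 hyz.le hUpos.le
    have hm2_2 : (x*z)*(y*z) ≤ U*V := mul_le_mul hu4 hv3 hyz.le hUpos.le
    have hm2_3 : (x*z)*(x*z) ≤ U*V := mul_le_mul hu4 hv1 hxz.le hUpos.le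
    calc x^3*y^3*z^5*w^3 = ((w)*(y*w))*(((w)*(y*z))*(((x*z)*(y*z))*((x*z)*(x*z)))) := by ring
      _ ≤ (U*V)*((U*V)*((U*V)*(U*V))) := by
          refine mul_le_mul hm2_0 ?_ (by positivity) hUV.le
          refine mul_le_mul hm2_1 ?_ (by positivity) hUV.le
          exact mul_le_mul hm2_2 hm2_3 (by positivity) hUV.le
      _ = (U*V)^4 := by ring
  have ht3 : x^3*y^3*z^5*w^5 ≤ (U*V)^4 := by
    have hm3_0 : (w)*(y*w) ≤ U*V := mul_le_mul hu3 hv4 hyw.le hUpos.le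
    have hm3_1 : (w)*(y*z) ≤ U*V := mul_le_mul hu3 hv3 hyz.le hUpos.le
    have hm3_2 : (x*z)*(y*z*w) ≤ U*V := mul_le_mul hu4 hv2 hyzw.le hUpos.le
    have hm3_3 : (x*z)*(x*z*w) ≤ U*V := mul_le_mul hu4 hv0 hxzw.le hUpos.le
    calc x^3*y^3*z^5*w^5 = ((w)*(y*w))*(((w)*(y*z))*(((x*z)*(y*z*w))*((x*z)*(x*z*w)))) := by ring
      _ ≤ (U*V)*((U*V)*((U*V)*(U*V))) := by
          refine mul_le_mul hm3_0 ?_ (by positivity) hUV.le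
          refine mul_le_mul hm3_1 ?_ (by positivity) hUV.le
          exact mul_le_mul hm3_2 hm3_3 (by positivity) hUV.le
      _ = (U*V)^4 := by ring
  have ht4 : x^3*y^5*z^3*w^3 ≤ (U*V)^4 := by
    have hm4_0 : (w)*(y*w) ≤ U*V := mul_le_mul hu3 hv4 hyw.le hUpos.le
    have hm4_1 : (w)*(y*z) ≤ U*V := mul_le_mul hu3 hv3 hyz.le hUpos.le
    have hm4_2 : (x*z)*(y*z) ≤ U*V := mul_le_mul hu4 hv3 hyz.le hUpos.le
    have hm4_3 : (x*y)*(x*y) ≤ U*V := mul_le_mul hu0 hv6 hxy.le hUpos.le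
    calc x^3*y^5*z^3*w^3 = ((w)*(y*w))*(((w)*(y*z))*(((x*z)*(y*z))*((x*y)*(x*y)))) := by ring
      _ ≤ (U*V)*((U*V)*((U*V)*(U*V))) := by
          refine mul_le_mul hm4_0 ?_ (by positivity) hUV.le
          refine mul_le_mul hm4_1 ?_ (by positivity) hUV.le
          exact mul_le_mul hm4_2 hm4_3 (by positivity) hUV.le
      _ = (U*V)^4 := by ring
  have ht5 : x^3*y^5*z^3*w^5 ≤ (U*V)^4 := by
    have hm5_0 : (w)*(y*w) ≤ U*V := mul_le_mul hu3 hv4 hyw.le hUpos.le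
    have hm5_1 : (w)*(y*z) ≤ U*V := mul_le_mul hu3 hv3 hyz.le hUpos.le
    have hm5_2 : (x*z)*(y*z*w) ≤ U*V := mul_le_mul hu4 hv2 hyzw.le hUpos.le
    have hm5_3 : (x*y)*(x*y*w) ≤ U*V := mul_le_mul hu0 hv7 hxyw.le hUpos.le
    calc x^3*y^5*z^3*w^5 = ((w)*(y*w))*(((w)*(y*z))*(((x*z)*(y*z*w))*((x*y)*(x*y*w)))) := by ring
      _ ≤ (U*V)*((U*V)*((U*V)*(U*V))) := by
          refine mul_le_mul hm5_0 ?_ (by positivity) hUV.le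
          refine mul_le_mul hm5_1 ?_ (by positivity) hUV.le
          exact mul_le_mul hm5_2 hm5_3 (by positivity) hUV.le
      _ = (U*V)^4 := by ring
  have ht6 : x^3*y^5*z^5*w^3 ≤ (U*V)^4 := by
    have hm6_0 : (w)*(y*w) ≤ U*V := mul_le_mul hu3 hv4 hyw.le hUpos.le
    have hm6_1 : (y*z)*(y*z) ≤ U*V := mul_le_mul hu5 hv3 hyz.le hUpos.le
    have hm6_2 : (x*z)*(y*z) ≤ U*V := mul_le_mul hu4 hv3 hyz.le hUpos.le
    have hm6_3 : (x*y)*(x*z*w) ≤ U*V := mul_le_mul hu0 hv0 hxzw.le hUpos.le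
    calc x^3*y^5*z^5*w^3 = ((w)*(y*w))*(((y*z)*(y*z))*(((x*z)*(y*z))*((x*y)*(x*z*w)))) := by ring
      _ ≤ (U*V)*((U*V)*((U*V)*(U*V))) := by
          refine mul_le_mul hm6_0 ?_ (by positivity) hUV.le
          refine mul_le_mul hm6_1 ?_ (by positivity) hUV.le
          exact mul_le_mul hm6_2 hm6_3 (by positivity) hUV.le
      _ = (U*V)^4 := by ring
  have ht7 : x^3*y^5*z^5*w^5 ≤ (U*V)^4 := by
    have hm7_0 : (w)*(y*w) ≤ U*V := mul_le_mul hu3 hv4 hyw.le hUpos.le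
    have hm7_1 : (y*z)*(y*z*w) ≤ U*V := mul_le_mul hu5 hv2 hyzw.le hUpos.le
    have hm7_2 : (x*z)*(y*z*w) ≤ U*V := mul_le_mul hu4 hv2 hyzw.le hUpos.le
    have hm7_3 : (x*y)*(x*z*w) ≤ U*V := mul_le_mul hu0 hv0 hxzw.le hUpos.le
    calc x^3*y^5*z^5*w^5 = ((w)*(y*w))*(((y*z)*(y*z*w))*(((x*z)*(y*z*w))*((x*y)*(x*z*w)))) := by ring
      _ ≤ (U*V)*((U*V)*((U*V)*(U*V))) := by
          refine mul_le_mul hm7_0 ?_ (by positivity) hUV.le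
          refine mul_le_mul hm7_1 ?_ (by positivity) hUV.le
          exact mul_le_mul hm7_2 hm7_3 (by positivity) hUV.le
      _ = (U*V)^4 := by ring
  have ht8 : x^5*y^3*z^3*w^3 ≤ (U*V)^4 := by
    have hm8_0 : (w)*(y*w) ≤ U*V := mul_le_mul hu3 hv4 hyw.le hUpos.le
    have hm8_1 : (w)*(x*z) ≤ U*V := mul_le_mul hu3 hv1 hxz.le hUpos.le
    have hm8_2 : (x*z)*(x*z) ≤ U*V := mul_le_mul hu4 hv1 hxz.le hUpos.le
    have hm8_3 : (x*y)*(x*y) ≤ U*V := mul_le_mul hu0 hv6 hxy.le hUpos.le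
    calc x^5*y^3*z^3*w^3 = ((w)*(y*w))*(((w)*(x*z))*(((x*z)*(x*z))*((x*y)*(x*y)))) := by ring
      _ ≤ (U*V)*((U*V)*((U*V)*(U*V))) := by
          refine mul_le_mul hm8_0 ?_ (by positivity) hUV.le
          refine mul_le_mul hm8_1 ?_ (by positivity) hUV.le
          exact mul_le_mul hm8_2 hm8_3 (by positivity) hUV.le
      _ = (U*V)^4 := by ring
  have ht9 : x^5*y^3*z^3*w^5 ≤ (U*V)^4 := by
    have hm9_0 : (w)*(y*w) ≤ U*V := mul_le_mul hu3 hv4 hyw.le hUpos.le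
    have hm9_1 : (w)*(x*z) ≤ U*V := mul_le_mul hu3 hv1 hxz.le hUpos.le
    have hm9_2 : (x*z)*(x*z*w) ≤ U*V := mul_le_mul hu4 hv0 hxzw.le hUpos.le
    have hm9_3 : (x*y)*(x*y*w) ≤ U*V := mul_le_mul hu0 hv7 hxyw.le hUpos.le
    calc x^5*y^3*z^3*w^5 = ((w)*(y*w))*(((w)*(x*z))*(((x*z)*(x*z*w))*((x*y)*(x*y*w)))) := by ring
      _ ≤ (U*V)*((U*V)*((U*V)*(U*V))) := by
          refine mul_le_mul hm9_0 ?_ (by positivity) hUV.le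
          refine mul_le_mul hm9_1 ?_ (by positivity) hUV.le
          exact mul_le_mul hm9_2 hm9_3 (by positivity) hUV.le
      _ = (U*V)^4 := by ring
  have ht10 : x^5*y^3*z^5*w^3 ≤ (U*V)^4 := by
    have hm10_0 : (w)*(y*w) ≤ U*V := mul_le_mul hu3 hv4 hyw.le hUpos.le
    have hm10_1 : (x*z)*(y*z) ≤ U*V := mul_le_mul hu4 hv3 hyz.le hUpos.le
    have hm10_2 : (x*z)*(x*z) ≤ U*V := mul_le_mul hu4 hv1 hxz.le hUpos.le
    have hm10_3 : (x*y)*(x*z*w) ≤ U*V := mul_le_mul hu0 hv0 hxzw.le hUpos.le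
    calc x^5*y^3*z^5*w^3 = ((w)*(y*w))*(((x*z)*(y*z))*(((x*z)*(x*z))*((x*y)*(x*z*w)))) := by ring
      _ ≤ (U*V)*((U*V)*((U*V)*(U*V))) := by
          refine mul_le_mul hm10_0 ?_ (by positivity) hUV.le
          refine mul_le_mul hm10_1 ?_ (by positivity) hUV.le
          exact mul_le_mul hm10_2 hm10_3 (by positivity) hUV.le
      _ = (U*V)^4 := by ring
  have ht11 : x^5*y^3*z^5*w^5 ≤ (U*V)^4 := by
    have hm11_0 : (w)*(y*w) ≤ U*V := mul_le_mul hu3 hv4 hyw.le hUpos.le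
    have hm11_1 : (x*z)*(y*z*w) ≤ U*V := mul_le_mul hu4 hv2 hyzw.le hUpos.le
    have hm11_2 : (x*z)*(x*z*w) ≤ U*V := mul_le_mul hu4 hv0 hxzw.le hUpos.le
    have hm11_3 : (x*y)*(x*z*w) ≤ U*V := mul_le_mul hu0 hv0 hxzw.le hUpos.le
    calc x^5*y^3*z^5*w^5 = ((w)*(y*w))*(((x*z)*(y*z*w))*(((x*z)*(x*z*w))*((x*y)*(x*z*w)))) := by ring
      _ ≤ (U*V)*((U*V)*((U*V)*(U*V))) := by
          refine mul_le_mul hm11_0 ?_ (by positivity) hUV.le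
          refine mul_le_mul hm11_1 ?_ (by positivity) hUV.le
          exact mul_le_mul hm11_2 hm11_3 (by positivity) hUV.le
      _ = (U*V)^4 := by ring
  have ht12 : x^5*y^5*z^3*w^3 ≤ (U*V)^4 := by
    have hm12_0 : (w)*(y*w) ≤ U*V := mul_le_mul hu3 hv4 hyw.le hUpos.le
    have hm12_1 : (x*z)*(y*z) ≤ U*V := mul_le_mul hu4 hv3 hyz.le hUpos.le
    have hm12_2 : (x*y)*(x*z) ≤ U*V := mul_le_mul hu0 hv1 hxz.le hUpos.le
    have hm12_3 : (x*y)*(x*y*w) ≤ U*V := mul_le_mul hu0 hv7 hxyw.le hUpos.le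
    calc x^5*y^5*z^3*w^3 = ((w)*(y*w))*(((x*z)*(y*z))*(((x*y)*(x*z))*((x*y)*(x*y*w)))) := by ring
      _ ≤ (U*V)*((U*V)*((U*V)*(U*V))) := by
          refine mul_le_mul hm12_0 ?_ (by positivity) hUV.le
          refine mul_le_mul hm12_1 ?_ (by positivity) hUV.le
          exact mul_le_mul hm12_2 hm12_3 (by positivity) hUV.le
      _ = (U*V)^4 := by ring
  have ht13 : x^5*y^5*z^3*w^5 ≤ (U*V)^4 := by
    have hm13_0 : (w)*(y*w) ≤ U*V := mul_le_mul hu3 hv4 hyw.le hUpos.le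
    have hm13_1 : (x*z)*(y*z*w) ≤ U*V := mul_le_mul hu4 hv2 hyzw.le hUpos.le
    have hm13_2 : (x*y)*(x*z*w) ≤ U*V := mul_le_mul hu0 hv0 hxzw.le hUpos.le
    have hm13_3 : (x*y)*(x*y*w) ≤ U*V := mul_le_mul hu0 hv7 hxyw.le hUpos.le
    calc x^5*y^5*z^3*w^5 = ((w)*(y*w))*(((x*z)*(y*z*w))*(((x*y)*(x*z*w))*((x*y)*(x*y*w)))) := by ring
      _ ≤ (U*V)*((U*V)*((U*V)*(U*V))) := by
          refine mul_le_mul hm13_0 ?_ (by positivity) hUV.le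
          refine mul_le_mul hm13_1 ?_ (by positivity) hUV.le
          exact mul_le_mul hm13_2 hm13_3 (by positivity) hUV.le
      _ = (U*V)^4 := by ring
  have ht14 : x^5*y^5*z^5*w^3 ≤ (U*V)^4 := by
    have hm14_0 : (z)*(y*z) ≤ U*V := mul_le_mul hu7 hv3 hyz.le hUpos.le
    have hm14_1 : (x*z)*(y*z*w) ≤ U*V := mul_le_mul hu4 hv2 hyzw.le hUpos.le
    have hm14_2 : (x*y)*(x*z*w) ≤ U*V := mul_le_mul hu0 hv0 hxzw.le hUpos.le
    have hm14_3 : (x*y)*(x*y*w) ≤ U*V := mul_le_mul hu0 hv7 hxyw.le hUpos.le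
    calc x^5*y^5*z^5*w^3 = ((z)*(y*z))*(((x*z)*(y*z*w))*(((x*y)*(x*z*w))*((x*y)*(x*y*w)))) := by ring
      _ ≤ (U*V)*((U*V)*((U*V)*(U*V))) := by
          refine mul_le_mul hm14_0 ?_ (by positivity) hUV.le
          refine mul_le_mul hm14_1 ?_ (by positivity) hUV.le
          exact mul_le_mul hm14_2 hm14_3 (by positivity) hUV.le
      _ = (U*V)^4 := by ring
  have ht15 : x^5*y^5*z^5*w^5 ≤ (U*V)^4 := by
    have hm15_0 : (z*w)*(y*z*w) ≤ U*V := mul_le_mul hu6 hv2 hyzw.le hUpos.le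
    have hm15_1 : (x*z)*(y*z*w) ≤ U*V := mul_le_mul hu4 hv2 hyzw.le hUpos.le
    have hm15_2 : (x*y)*(x*z*w) ≤ U*V := mul_le_mul hu0 hv0 hxzw.le hUpos.le
    have hm15_3 : (x*y)*(x*y*w) ≤ U*V := mul_le_mul hu0 hv7 hxyw.le hUpos.le
    calc x^5*y^5*z^5*w^5 = ((z*w)*(y*z*w))*(((x*z)*(y*z*w))*(((x*y)*(x*z*w))*((x*y)*(x*y*w)))) := by ring
      _ ≤ (U*V)*((U*V)*((U*V)*(U*V))) := by
          refine mul_le_mul hm15_0 ?_ (by positivity) hUV.le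
          refine mul_le_mul hm15_1 ?_ (by positivity) hUV.le
          exact mul_le_mul hm15_2 hm15_3 (by positivity) hUV.le
      _ = (U*V)^4 := by ring
  have hsum : (x^3+x^5)*((y^3+y^5)*((z^3+z^5)*(w^3+w^5))) ≤ 16*(U*V)^4 := by
    have e : (x^3+x^5)*((y^3+y^5)*((z^3+z^5)*(w^3+w^5))) = x^3*y^3*z^3*w^3 + x^3*y^3*z^3*w^5 + x^3*y^3*z^5*w^3 + x^3*y^3*z^5*w^5 + x^3*y^5*z^3*w^3 + x^3*y^5*z^3*w^5 + x^3*y^5*z^5*w^3 + x^3*y^5*z^5*w^5 + x^5*y^3*z^3*w^3 + x^5*y^3*z^3*w^5 + x^5*y^3*z^5*w^3 + x^5*y^3*z^5*w^5 + x^5*y^5*z^3*w^3 + x^5*y^5*z^3*w^5 + x^5*y^5*z^5*w^3 + x^5*y^5*z^5*w^5 := by ring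
    rw [e]
    linarith [ht0, ht1, ht2, ht3, ht4, ht5, ht6, ht7, ht8, ht9, ht10, ht11, ht12, ht13, ht14, ht15]
  -- per-variable bound t^3*(1+t)^2 ≤ 2*(t^3+t^5)
  have hvb : ∀ t : ℝ, 0 < t → t^3*(1+t)^2 ≤ 2*(t^3+t^5) := by
    intro t ht
    nlinarith [mul_nonneg (pow_nonneg ht.le 3) (sq_nonneg (1-t)), pow_pos ht 3, pow_pos ht 5]
  have hprod : (x^3*(1+x)^2) * ((y^3*(1+y)^2) * ((z^3*(1+z)^2) * (w^3*(1+w)^2))) ≤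
      (4*(U*V))^4 := by
    have h1x := hvb x hx
    have h1y := hvb y hy
    have h1z := hvb z hz
    have h1w := hvb w hw
    have hnx : (0:ℝ) ≤ x^3*(1+x)^2 := by positivity
    have hny : (0:ℝ) ≤ y^3*(1+y)^2 := by positivity
    have hnz : (0:ℝ) ≤ z^3*(1+z)^2 := by positivity
    have hnw : (0:ℝ) ≤ w^3*(1+w)^2 := by positivity
    have h2x : (0:ℝ) ≤ 2*(x^3+x^5) := by positivity
    have h2y : (0:ℝ) ≤ 2*(y^3+y^5) := by positivity
    have h2z : (0:ℝ) ≤ 2*(z^3+z^5) := by positivity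
    have h2w : (0:ℝ) ≤ 2*(w^3+w^5) := by positivity
    have step : (x^3*(1+x)^2) * ((y^3*(1+y)^2) * ((z^3*(1+z)^2) * (w^3*(1+w)^2))) ≤
        (2*(x^3+x^5)) * ((2*(y^3+y^5)) * ((2*(z^3+z^5)) * (2*(w^3+w^5)))) := by
      refine mul_le_mul h1x ?_ (by positivity) h2x
      refine mul_le_mul h1y ?_ (by positivity) h2y
      exact mul_le_mul h1z h1w (by positivity) h2z
    calc (x^3*(1+x)^2) * ((y^3*(1+y)^2) * ((z^3*(1+z)^2) * (w^3*(1+w)^2)))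
        ≤ (2*(x^3+x^5)) * ((2*(y^3+y^5)) * ((2*(z^3+z^5)) * (2*(w^3+w^5)))) := step
      _ = 16 * ((x^3+x^5)*((y^3+y^5)*((z^3+z^5)*(w^3+w^5)))) := by ring
      _ ≤ 16 * (16*(U*V)^4) := by linarith [hsum]
      _ = (4*(U*V))^4 := by ring
  -- introduce h t = t^(3/4)*(1+t)^(1/2)
  set P := (x ^ ((3:ℝ)/4) * (1+x) ^ ((1:ℝ)/2)) * ((y ^ ((3:ℝ)/4) * (1+y) ^ ((1:ℝ)/2)) *
    ((z ^ ((3:ℝ)/4) * (1+z) ^ ((1:ℝ)/2)) * (w ^ ((3:ℝ)/4) * (1+w) ^ ((1:ℝ)/2)))) with hPdef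
  have hone : ∀ t : ℝ, 0 < t → (0:ℝ) < 1 + t := fun t ht => by linarith
  have hPpos : 0 < P := by
    rw [hPdef]
    have h1x := hone x hx
    have h1y := hone y hy
    have h1z := hone z hz
    have h1w := hone w hw
    positivity
  have hfac : ∀ t : ℝ, 0 < t →
      (t ^ ((3:ℝ)/4) * (1+t) ^ ((1:ℝ)/2))^(4:ℕ) = t^3*(1+t)^2 := by
    intro t ht
    rw [mul_pow, rpow_pow_eq ht.le (by norm_num : ((3:ℝ)/4) * (4:ℕ) = (3:ℕ)),
      rpow_pow_eq (by linarith : (0:ℝ) ≤ 1+t) (by norm_num : ((1:ℝ)/2) * (4:ℕ) = (2:ℕ))]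
  have hP4 : P^(4:ℕ) ≤ (4*(U*V))^(4:ℕ) := by
    have e : P^(4:ℕ) = (x^3*(1+x)^2) * ((y^3*(1+y)^2) * ((z^3*(1+z)^2) * (w^3*(1+w)^2))) := by
      rw [hPdef,
        show ∀ a b c d : ℝ, (a*(b*(c*d)))^(4:ℕ) = a^(4:ℕ)*(b^(4:ℕ)*(c^(4:ℕ)*d^(4:ℕ))) from
          fun a b c d => by ring,
        hfac x hx, hfac y hy, hfac z hz, hfac w hw]
    rw [e]
    exact hprod
  have hPle : P ≤ 4*(U*V) := by
    refine le_of_pow_le_pow_left₀ (by norm_num) (by positivity) hP4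
  -- now convert to the gg form
  have hg_inv : ∀ t : ℝ, 0 < t → gg t = (t ^ ((3:ℝ)/4) * (1+t) ^ ((1:ℝ)/2))⁻¹ := by
    intro t ht
    unfold gg
    rw [mul_inv, show (-(3:ℝ)/4) = -((3:ℝ)/4) by norm_num,
      show (-(1:ℝ)/2) = -((1:ℝ)/2) by norm_num,
      Real.rpow_neg ht.le, Real.rpow_neg (by linarith : (0:ℝ) ≤ 1+t)]
  have hgP : gg x * (gg y * (gg z * gg w)) = P⁻¹ := by
    rw [hg_inv x hx, hg_inv y hy, hg_inv z hz, hg_inv w hw, hPdef,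
      show ∀ a b c d : ℝ, a⁻¹*(b⁻¹*(c⁻¹*d⁻¹)) = (a*(b*(c*d)))⁻¹ from
        fun a b c d => by rw [mul_inv, mul_inv, mul_inv]]
  rw [hgP]
  rw [div_le_iff₀ (by positivity)]
  have h4 : 4 * P⁻¹ * (U * V) = (4 * (U*V)) * P⁻¹ := by ring
  rw [h4]
  calc (1:ℝ) = P * P⁻¹ := by rw [mul_inv_cancel₀ hPpos.ne']
    _ ≤ (4*(U*V)) * P⁻¹ := mul_le_mul_of_nonneg_right hPle (by positivity)

lemma gg_integrable : IntegrableOn gg (Ioi (0:ℝ)) volume := by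
  have hcont : ContinuousOn gg (Ioi (0:ℝ)) := by
    apply ContinuousOn.mul
    · exact continuousOn_id.rpow_const fun t ht => Or.inl (ne_of_gt ht)
    · exact (continuousOn_const.add continuousOn_id).rpow_const
        fun t ht => Or.inl (by simp only [mem_Ioi] at ht; exact (show (0:ℝ) < 1 + t by linarith).ne')
  have h01 : IntegrableOn gg (Ioc (0:ℝ) 1) volume := by
    have hbase : IntegrableOn (fun t : ℝ => t ^ (-(3:ℝ)/4)) (Ioc (0:ℝ) 1) volume := by
      have := intervalIntegral.intervalIntegrable_rpow' (a := 0) (b := 1) (r := -(3:ℝ)/4) (by norm_num)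
      rwa [intervalIntegrable_iff, uIoc_of_le zero_le_one] at this
    refine Integrable.mono' hbase ?_ ?_
    · exact (hcont.mono Ioc_subset_Ioi_self).aestronglyMeasurable measurableSet_Ioc
    · filter_upwards [ae_restrict_mem measurableSet_Ioc] with t ht
      have ht0 : 0 < t := ht.1
      have h1t : (0:ℝ) < 1 + t := by linarith
      rw [Real.norm_of_nonneg (le_of_lt (gg_pos ht0))]
      unfold gg
      have h2 : (1+t) ^ (-(1:ℝ)/2) ≤ 1 :=
        Real.rpow_le_one_of_one_le_of_nonpos (by linarith) (by norm_num)
      calc t ^ (-(3:ℝ)/4) * (1+t) ^ (-(1:ℝ)/2) ≤ t ^ (-(3:ℝ)/4) * 1 :=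
            mul_le_mul_of_nonneg_left h2 (Real.rpow_nonneg ht0.le _)
        _ = t ^ (-(3:ℝ)/4) := mul_one _
  have h1i : IntegrableOn gg (Ioi (1:ℝ)) volume := by
    have hbase : IntegrableOn (fun t : ℝ => t ^ (-(5:ℝ)/4)) (Ioi (1:ℝ)) volume :=
      integrableOn_Ioi_rpow_of_lt (by norm_num) one_pos
    refine Integrable.mono' hbase ?_ ?_
    · exact (hcont.mono (Ioi_subset_Ioi zero_le_one)).aestronglyMeasurable measurableSet_Ioi
    · filter_upwards [ae_restrict_mem measurableSet_Ioi] with t ht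
      have ht0 : (0:ℝ) < t := lt_trans one_pos ht
      rw [Real.norm_of_nonneg (le_of_lt (gg_pos ht0))]
      unfold gg
      have h2 : (1+t) ^ (-(1:ℝ)/2) ≤ t ^ (-(1:ℝ)/2) :=
        Real.rpow_le_rpow_of_nonpos ht0 (by linarith) (by norm_num)
      calc t ^ (-(3:ℝ)/4) * (1+t) ^ (-(1:ℝ)/2) ≤ t ^ (-(3:ℝ)/4) * t ^ (-(1:ℝ)/2) :=
            mul_le_mul_of_nonneg_left h2 (Real.rpow_nonneg ht0.le _)
        _ = t ^ (-(5:ℝ)/4) := by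
            rw [← Real.rpow_add ht0]; norm_num
  have := h01.union h1i
  rwa [Ioc_union_Ioi_eq_Ioi zero_le_one] at this

/-- Convergence of the two-loop two-point period integral
`∫_{(0,∞)⁴} dα₁dα₂dα₃dα₄ / (U·V)` with `α₅ = 1`, where `U, V` are the two
Symanzik polynomials of the two-loop two-point graph. -/
theorem two_loop_period_integrable :
    IntegrableOn
      (fun a : ℝ × ℝ × ℝ × ℝ =>
        1 / (((a.1 + 1) * (a.2.1 + a.2.2.2) + a.2.2.1 * (a.1 + a.2.1 + a.2.2.2 + 1)) *
          (a.2.2.1 * (a.1 + a.2.1) * (a.2.2.2 + 1) +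
            a.2.1 * a.2.2.2 * 1 + a.1 * a.2.2.2 * 1 + a.1 * a.2.1 * 1 +
            a.1 * a.2.1 * a.2.2.2)))
      (Set.Ioi 0 ×ˢ Set.Ioi 0 ×ˢ Set.Ioi 0 ×ˢ Set.Ioi 0) volume := by
  -- the dominating function
  set F : ℝ × ℝ × ℝ × ℝ → ℝ :=
    fun a => gg a.1 * (gg a.2.1 * (gg a.2.2.1 * gg a.2.2.2)) with hFdef
  have hF : IntegrableOn F (Set.Ioi 0 ×ˢ Set.Ioi 0 ×ˢ Set.Ioi 0 ×ˢ Set.Ioi 0) volume := by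
    have h1 : Integrable (fun p : ℝ × ℝ => gg p.1 * gg p.2)
        ((volume.restrict (Ioi (0:ℝ))).prod (volume.restrict (Ioi (0:ℝ)))) :=
      Integrable.mul_prod gg_integrable gg_integrable
    have h2 : Integrable (fun p : ℝ × ℝ × ℝ => gg p.1 * (gg p.2.1 * gg p.2.2))
        ((volume.restrict (Ioi (0:ℝ))).prod
          ((volume.restrict (Ioi (0:ℝ))).prod (volume.restrict (Ioi (0:ℝ))))) :=
      Integrable.mul_prod gg_integrable h1
    have h3 : Integrable F
        ((volume.restrict (Ioi (0:ℝ))).prod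
          ((volume.restrict (Ioi (0:ℝ))).prod
            ((volume.restrict (Ioi (0:ℝ))).prod (volume.restrict (Ioi (0:ℝ)))))) :=
      Integrable.mul_prod gg_integrable h2
    rw [IntegrableOn]
    rw [show (volume : Measure (ℝ × ℝ × ℝ × ℝ)).restrict
          (Set.Ioi 0 ×ˢ Set.Ioi 0 ×ˢ Set.Ioi 0 ×ˢ Set.Ioi 0) =
        (volume.restrict (Ioi (0:ℝ))).prod
          ((volume.restrict (Ioi (0:ℝ))).prod
            ((volume.restrict (Ioi (0:ℝ))).prod (volume.restrict (Ioi (0:ℝ))))) from ?_]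
    · exact h3
    · rw [Measure.prod_restrict, Measure.prod_restrict, Measure.prod_restrict]
      rw [← Measure.volume_eq_prod, ← Measure.volume_eq_prod, ← Measure.volume_eq_prod]
  have hmeas : MeasurableSet (Set.Ioi (0:ℝ) ×ˢ Set.Ioi (0:ℝ) ×ˢ Set.Ioi (0:ℝ) ×ˢ Set.Ioi (0:ℝ)) :=
    measurableSet_Ioi.prod (measurableSet_Ioi.prod (measurableSet_Ioi.prod measurableSet_Ioi))
  refine Integrable.mono' (hF.const_mul 4) ?_ ?_
  · have hPc : Continuous (fun a : ℝ × ℝ × ℝ × ℝ =>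
        ((a.1 + 1) * (a.2.1 + a.2.2.2) + a.2.2.1 * (a.1 + a.2.1 + a.2.2.2 + 1)) *
          (a.2.2.1 * (a.1 + a.2.1) * (a.2.2.2 + 1) +
            a.2.1 * a.2.2.2 * 1 + a.1 * a.2.2.2 * 1 + a.1 * a.2.1 * 1 +
            a.1 * a.2.1 * a.2.2.2)) := by fun_prop
    simp only [one_div]
    exact hPc.measurable.inv.aestronglyMeasurable
  · rw [ae_restrict_iff' hmeas]
    filter_upwards with a ha
    obtain ⟨hx, hy, hz, hw⟩ : 0 < a.1 ∧ 0 < a.2.1 ∧ 0 < a.2.2.1 ∧ 0 < a.2.2.2 := by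
      simpa [Set.mem_prod] using ha
    have hb := key_bound hx hy hz hw
    have hUpos : 0 < (a.1 + 1) * (a.2.1 + a.2.2.2) + a.2.2.1 * (a.1 + a.2.1 + a.2.2.2 + 1) := by
      nlinarith [mul_pos hx hy, mul_pos hx hw, mul_pos hz hx]
    have hVpos : 0 < a.2.2.1 * (a.1 + a.2.1) * (a.2.2.2 + 1) +
        a.2.1 * a.2.2.2 * 1 + a.1 * a.2.2.2 * 1 + a.1 * a.2.1 * 1 + a.1 * a.2.1 * a.2.2.2 := by
      nlinarith [mul_pos (mul_pos hz hx) hw, mul_pos hy hw, mul_pos hx hy,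
        mul_pos (mul_pos hx hy) hw, mul_pos hx hw, mul_pos hz hx, mul_pos hz hy]
    rw [Real.norm_of_nonneg (by positivity)]
    exact hb
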